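/- The scoring rule that awards scores (k, k−1, ..., 3, 2, 0) for k candidates (Borda with an extra point for all but the last position) never ranks a majority loser first: a majority loser's total over n races is strictly less than n·k/2, which is at most the average total score n(k+2)(k−1)/(2k), for all k ≥ 2. -/

import Mathlib

/-- Total score of candidate `a`: in race `i`, `P i` sends each candidate to their
(0-indexed) finishing position, which is worth `s` points. -/
def TotalScore {n k : ℕ} (s : Fin k → ℝ) (P : Fin n → Equiv.Perm (Fin k)) (a : Fin k) : ℝ :=
  ∑ i, s (P i a)

/-- The scoring rule with scores `(k, k-1, ..., 3, 2, 0)` (Borda plus one point for every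
position except the last) never ranks a majority loser first: the majority loser's total
over `n` races is strictly below `n·k/2`, which is at most the average total
`n(k+2)(k-1)/(2k)`, for all `k ≥ 2`. -/
theorem stmt17 (k n : ℕ) (hk : 2 ≤ k) (P : Fin n → Equiv.Perm (Fin k)) (c : Fin k)
    (hml : 2 * (Finset.univ.filter fun i => (P i c : ℕ) = k - 1).card > n) :
    TotalScore (fun j : Fin k => if (j : ℕ) = k - 1 then 0 else (k : ℝ) - (j : ℕ)) P c <
      (n : ℝ) * (k : ℝ) / 2 ∧
    (n : ℝ) * (k : ℝ) / 2 ≤ (n : ℝ) * ((k : ℝ) + 2) * ((k : ℝ) - 1) / (2 * (k : ℝ)) ∧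
    (∑ a, TotalScore (fun j : Fin k => if (j : ℕ) = k - 1 then 0 else (k : ℝ) - (j : ℕ)) P a)
        / (k : ℝ) = (n : ℝ) * ((k : ℝ) + 2) * ((k : ℝ) - 1) / (2 * (k : ℝ)) ∧
    ∃ b : Fin k,
      TotalScore (fun j : Fin k => if (j : ℕ) = k - 1 then 0 else (k : ℝ) - (j : ℕ)) P c <
        TotalScore (fun j : Fin k => if (j : ℕ) = k - 1 then 0 else (k : ℝ) - (j : ℕ)) P b := by
  set s : Fin k → ℝ := fun j : Fin k => if (j : ℕ) = k - 1 then 0 else (k : ℝ) - (j : ℕ) with hs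
  have hkR : (1:ℝ) ≤ (k:ℝ) := by exact_mod_cast Nat.one_le_of_lt hk
  have hk0 : (0:ℝ) < k := by linarith
  -- score values bound
  have hs_le : ∀ j : Fin k, s j ≤ (k:ℝ) := by
    intro j
    simp only [hs]
    split
    · positivity
    · have : (0:ℝ) ≤ (j:ℕ) := by positivity
      linarith
  -- sum of scores
  have hsum : ∑ j : Fin k, s j = ((k:ℝ)+2)*((k:ℝ)-1)/2 := by
    have h1k : 1 ≤ k := by omega
    let e : Fin k := ⟨k-1, by omega⟩
    have hev : (e:ℕ) = k - 1 := rfl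
    have hcast : ((k-1:ℕ):ℝ) = (k:ℝ) - 1 := by push_cast [Nat.cast_sub h1k]; ring
    have hrw : ∀ j : Fin k, s j = ((k:ℝ) - (j:ℕ)) - (if j = e then 1 else 0) := by
      intro j
      rcases eq_or_ne j e with h | h
      · subst h
        simp only [hs, hev, hcast, if_pos, if_true, eq_self_iff_true]
        ring
      · have hv : (j:ℕ) ≠ k - 1 := fun hh => h (Fin.ext (hh.trans hev.symm))
        simp [hs, if_neg h, if_neg hv]
    rw [Finset.sum_congr rfl (fun j _ => hrw j)]
    rw [Finset.sum_sub_distrib, Finset.sum_ite_eq' Finset.univ e (fun _ => (1:ℝ))]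
    simp only [Finset.mem_univ, if_pos]
    have h1 : ∑ j : Fin k, ((k:ℝ) - (j:ℕ)) = k * k - (k:ℝ)*((k:ℝ)-1)/2 := by
      rw [Finset.sum_sub_distrib, Finset.sum_const, Finset.card_univ, Fintype.card_fin]
      have h2 : ∑ j : Fin k, ((j:ℕ):ℝ) = (k:ℝ)*((k:ℝ)-1)/2 := by
        rw [Fin.sum_univ_eq_sum_range]
        have hg := Finset.sum_range_id_mul_two k
        have hcR : ((∑ i ∈ Finset.range k, i : ℕ):ℝ) * 2 = (k:ℝ) * (((k-1:ℕ)):ℝ) := by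
          exact_mod_cast hg
        rw [hcast] at hcR
        push_cast at hcR ⊢
        linarith
      rw [h2]
      push_cast
      ring
    rw [h1]; ring
  -- total sum over all candidates
  have htot : ∑ a, TotalScore s P a = (n:ℝ) * (((k:ℝ)+2)*((k:ℝ)-1)/2) := by
    unfold TotalScore
    rw [Finset.sum_comm]
    have : ∀ i : Fin n, ∑ a, s (P i a) = ((k:ℝ)+2)*((k:ℝ)-1)/2 := by
      intro i
      rw [Equiv.sum_comp (P i) s]
      exact hsum
    rw [Finset.sum_congr rfl (fun i _ => this i), Finset.sum_const, Finset.card_univ,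
      Fintype.card_fin, nsmul_eq_mul]
  -- part 3
  have part3 : (∑ a, TotalScore s P a) / (k:ℝ)
      = (n : ℝ) * ((k : ℝ) + 2) * ((k : ℝ) - 1) / (2 * (k : ℝ)) := by
    rw [htot]; field_simp
  -- part 2
  have part2 : (n : ℝ) * (k : ℝ) / 2 ≤ (n : ℝ) * ((k : ℝ) + 2) * ((k : ℝ) - 1) / (2 * (k : ℝ)) := by
    rw [div_le_div_iff₀ (by norm_num) (by positivity)]
    have hn0 : (0:ℝ) ≤ n := by positivity
    have hk2 : (2:ℝ) ≤ k := by exact_mod_cast hk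
    nlinarith [mul_nonneg hn0 (sub_nonneg.mpr hk2)]
  -- part 1
  set M := Finset.univ.filter fun i : Fin n => (P i c : ℕ) = k - 1 with hM
  have hmn : M.card ≤ n := by
    calc M.card ≤ (Finset.univ : Finset (Fin n)).card := Finset.card_filter_le _ _
    _ = n := by simp
  have part1 : TotalScore s P c < (n:ℝ) * (k:ℝ) / 2 := by
    have hsplit : TotalScore s P c = ∑ i ∈ Mᶜ, s (P i c) := by
      unfold TotalScore
      rw [← Finset.sum_add_sum_compl M]
      have hz : ∑ i ∈ M, s (P i c) = 0 := by
        apply Finset.sum_eq_zero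
        intro i hi
        rw [hM, Finset.mem_filter] at hi
        simp [hs, hi.2]
      rw [hz, zero_add]
    rw [hsplit]
    have hle : ∑ i ∈ Mᶜ, s (P i c) ≤ (Mᶜ.card : ℝ) * k := by
      calc ∑ i ∈ Mᶜ, s (P i c) ≤ ∑ i ∈ Mᶜ, (k:ℝ) :=
        Finset.sum_le_sum (fun i _ => hs_le _)
      _ = (Mᶜ.card : ℝ) * k := by rw [Finset.sum_const, nsmul_eq_mul]
    have hcard : (Mᶜ.card : ℝ) = (n:ℝ) - M.card := by
      rw [Finset.card_compl, Fintype.card_fin]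
      push_cast [hmn]; ring
    have hmlR : (n:ℝ) < 2 * M.card := by exact_mod_cast hml
    calc ∑ i ∈ Mᶜ, s (P i c) ≤ (Mᶜ.card : ℝ) * k := hle
    _ = ((n:ℝ) - M.card) * k := by rw [hcard]
    _ < (n:ℝ) * (k:ℝ) / 2 := by nlinarith
  refine ⟨part1, part2, part3, ?_⟩
  -- part 4
  by_contra h
  push_neg at h
  have hsum_le : ∑ a, TotalScore s P a ≤ (k:ℝ) * TotalScore s P c := by
    calc ∑ a, TotalScore s P a ≤ ∑ _a : Fin k, TotalScore s P c :=
        Finset.sum_le_sum (fun a _ => h a)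
    _ = (k:ℝ) * TotalScore s P c := by
        rw [Finset.sum_const, Finset.card_univ, Fintype.card_fin, nsmul_eq_mul]
  have hsum_ge : (k:ℝ) * ((n:ℝ)*(k:ℝ)/2) ≤ ∑ a, TotalScore s P a := by
    have h1 : (n:ℝ)*(k:ℝ)/2 ≤ (∑ a, TotalScore s P a) / (k:ℝ) := part3 ▸ part2
    calc (k:ℝ) * ((n:ℝ)*(k:ℝ)/2) ≤ (k:ℝ) * ((∑ a, TotalScore s P a) / (k:ℝ)) :=
        mul_le_mul_of_nonneg_left h1 hk0.le
    _ = ∑ a, TotalScore s P a := by field_simp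
  have hTc : (n:ℝ)*(k:ℝ)/2 ≤ TotalScore s P c :=
    le_of_mul_le_mul_left (hsum_ge.trans hsum_le) hk0
  linarith
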